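/- Let τ be a positivistic theory (a collection of Σ conditionals). If φ₁, …, φₙ are I(L_{∞ω}) sentences each assertible from τ, and the sequent φ₁, …, φₙ ⊢ ψ is derivable in the infinitary intuitionistic sequent calculus LI_{∞ω} for some I(L_{∞ω}) sentence ψ, then ψ is assertible from τ. -/

import Mathlib

namespace Infinitary

/-!
Core development: infinitary formulas over the vocabulary `=, ≠, ∈, ∉` with
parameters from the universe of sets, comprising both the Σ(L_{∞ω}) formulas
(set-indexed ⋀ and ⋁, bounded ∀, unbounded ∃) and the I(L_{∞ω}) formulas
(set-indexed ⋀ and ⋁, unbounded ∃ and ∀, implication); the truth predicate 𝕋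
for Σ(L_{∞ω}) sentences; the intuitionistic infinitary sequent calculus
LI_{∞ω} of Figure 5; and the assertibility predicate.
-/

/-- Terms: variables and parameter symbols naming sets. -/
inductive LTm : Type 1
  | var : ℕ → LTm
  | param : ZFSet → LTm

/-- Infinitary formulas.  `conj I f` denotes ⋀_{a ∈ I} f a and `disj I f`
denotes ⋁_{a ∈ I} f a. -/
inductive LForm : Type 1
  | tru : LForm
  | fls : LForm
  | eq : LTm → LTm → LForm
  | ne : LTm → LTm → LForm
  | mem : LTm → LTm → LForm
  | nmem : LTm → LTm → LForm
  | conj : ZFSet → (ZFSet → LForm) → LForm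
  | disj : ZFSet → (ZFSet → LForm) → LForm
  | ball : ℕ → LTm → LForm → LForm
  | ex : ℕ → LForm → LForm
  | all : ℕ → LForm → LForm
  | imp : LForm → LForm → LForm

/-- Σ(L_{∞ω}) formulas: built from atomic formulas and ⊤, ⊥ using set-indexed
conjunction and disjunction, bounded universal quantification, and unbounded
existential quantification. -/
def IsSigma : LForm → Prop
  | .conj I f => ∀ a : ZFSet, a ∈ I → IsSigma (f a)
  | .disj I f => ∀ a : ZFSet, a ∈ I → IsSigma (f a)
  | .ball _ _ φ => IsSigma φ
  | .ex _ φ => IsSigma φ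
  | .all _ _ => False
  | .imp _ _ => False
  | _ => True

/-- I(L_{∞ω}) formulas: built from atomic formulas and ⊤, ⊥ using set-indexed
conjunction and disjunction, unbounded existential and universal
quantification, and implication. -/
def IsI : LForm → Prop
  | .conj I f => ∀ a : ZFSet, a ∈ I → IsI (f a)
  | .disj I f => ∀ a : ZFSet, a ∈ I → IsI (f a)
  | .ball _ _ _ => False
  | .ex _ φ => IsI φ
  | .all _ φ => IsI φ
  | .imp φ ψ => IsI φ ∧ IsI ψ
  | _ => True

/-- Finitary (L_{ωω}) formulas: all conjunctions and disjunctions are over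
finite index sets. -/
def IsFinitary : LForm → Prop
  | .conj I f => I.toSet.Finite ∧ ∀ a : ZFSet, a ∈ I → IsFinitary (f a)
  | .disj I f => I.toSet.Finite ∧ ∀ a : ZFSet, a ∈ I → IsFinitary (f a)
  | .ball _ _ φ => IsFinitary φ
  | .ex _ φ => IsFinitary φ
  | .all _ φ => IsFinitary φ
  | .imp φ ψ => IsFinitary φ ∧ IsFinitary ψ
  | _ => True

/-- The free variables of a formula. -/
def free : LForm → Set ℕ
  | .tru => ∅
  | .fls => ∅
  | .eq s t => {n | s = .var n ∨ t = .var n}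
  | .ne s t => {n | s = .var n ∨ t = .var n}
  | .mem s t => {n | s = .var n ∨ t = .var n}
  | .nmem s t => {n | s = .var n ∨ t = .var n}
  | .conj I f => {n | ∃ a : ZFSet, a ∈ I ∧ n ∈ free (f a)}
  | .disj I f => {n | ∃ a : ZFSet, a ∈ I ∧ n ∈ free (f a)}
  | .ball x t φ => {n | t = .var n} ∪ (free φ \ {x})
  | .ex x φ => free φ \ {x}
  | .all x φ => free φ \ {x}
  | .imp φ ψ => free φ ∪ free ψ

/-- A sentence: no free variables. -/
def IsSentence (φ : LForm) : Prop := free φ = ∅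

/-- Substitution of a term for a variable in a term. -/
def tsubst (x : ℕ) (u : LTm) : LTm → LTm
  | .var n => if n = x then u else .var n
  | .param a => .param a

/-- Substitution of a term for the free occurrences of a variable. -/
def subst (x : ℕ) (u : LTm) : LForm → LForm
  | .tru => .tru
  | .fls => .fls
  | .eq s t => .eq (tsubst x u s) (tsubst x u t)
  | .ne s t => .ne (tsubst x u s) (tsubst x u t)
  | .mem s t => .mem (tsubst x u s) (tsubst x u t)
  | .nmem s t => .nmem (tsubst x u s) (tsubst x u t)
  | .conj I f => .conj I (fun a => subst x u (f a))
  | .disj I f => .disj I (fun a => subst x u (f a))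
  | .ball y t φ => .ball y (tsubst x u t) (if y = x then φ else subst x u φ)
  | .ex y φ => .ex y (if y = x then φ else subst x u φ)
  | .all y φ => .all y (if y = x then φ else subst x u φ)
  | .imp φ ψ => .imp (subst x u φ) (subst x u ψ)

/-- A verification: a set of Σ(L_{∞ω}) sentences with parameters closed under
the canonical decomposition clauses, whose atomic members are true. -/
structure IsVerification (V : Set LForm) : Prop where
  conj_mem : ∀ (I : ZFSet) (f : ZFSet → LForm), LForm.conj I f ∈ V →
    ∀ a : ZFSet, a ∈ I → f a ∈ V
  disj_mem : ∀ (I : ZFSet) (f : ZFSet → LForm), LForm.disj I f ∈ V →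
    ∃ a : ZFSet, a ∈ I ∧ f a ∈ V
  ex_mem : ∀ (x : ℕ) (φ : LForm), LForm.ex x φ ∈ V →
    ∃ a : ZFSet, subst x (.param a) φ ∈ V
  ball_mem : ∀ (x : ℕ) (b : ZFSet) (φ : LForm), LForm.ball x (.param b) φ ∈ V →
    ∀ a : ZFSet, a ∈ b → subst x (.param a) φ ∈ V
  mem_true : ∀ a b : ZFSet, LForm.mem (.param a) (.param b) ∈ V → a ∈ b
  nmem_true : ∀ a b : ZFSet, LForm.nmem (.param a) (.param b) ∈ V → a ∉ b
  eq_true : ∀ a b : ZFSet, LForm.eq (.param a) (.param b) ∈ V → a = b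
  ne_true : ∀ a b : ZFSet, LForm.ne (.param a) (.param b) ∈ V → a ≠ b

/-- The truth predicate 𝕋 for Σ(L_{∞ω}) sentences with parameters. -/
def LTrue (φ : LForm) : Prop := ∃ V : Set LForm, IsVerification V ∧ φ ∈ V

/-- The variable w is fresh for every formula of the list. -/
def FreshFor (w : ℕ) (Γ : List LForm) : Prop := ∀ φ ∈ Γ, w ∉ free φ

/-- The variable w is fresh for the succedent. -/
def FreshForO (w : ℕ) : Option LForm → Prop
  | none => True
  | some φ => w ∉ free φ

/-- The intuitionistic infinitary sequent calculus LI_{∞ω} of Figure 5: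
sequents Γ ⊢ Δ with Γ a finite list and Δ a singleton or empty; derivations
are well-founded trees. -/
inductive LIDer : List LForm → Option LForm → Prop
  | botL : LIDer [.fls] none
  | topR : LIDer [] (some .tru)
  | impL {Γ Γ' : List LForm} {Δ : Option LForm} {φ ψ : LForm} :
      LIDer Γ (some φ) → LIDer (ψ :: Γ') Δ → LIDer (.imp φ ψ :: (Γ ++ Γ')) Δ
  | impR {Γ : List LForm} {φ ψ : LForm} :
      LIDer (φ :: Γ) (some ψ) → LIDer Γ (some (.imp φ ψ))
  | conjL {Γ : List LForm} {Δ : Option LForm} {I : ZFSet} {f : ZFSet → LForm}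
      (a : ZFSet) : a ∈ I → LIDer (f a :: Γ) Δ → LIDer (.conj I f :: Γ) Δ
  | conjR {Γ : List LForm} {I : ZFSet} {f : ZFSet → LForm} :
      (∀ a : ZFSet, a ∈ I → LIDer Γ (some (f a))) → LIDer Γ (some (.conj I f))
  | disjL {Γ : List LForm} {Δ : Option LForm} {I : ZFSet} {f : ZFSet → LForm} :
      (∀ a : ZFSet, a ∈ I → LIDer (f a :: Γ) Δ) → LIDer (.disj I f :: Γ) Δ
  | disjR {Γ : List LForm} {I : ZFSet} {f : ZFSet → LForm} (a : ZFSet) :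
      a ∈ I → LIDer Γ (some (f a)) → LIDer Γ (some (.disj I f))
  | allL {Γ : List LForm} {Δ : Option LForm} {x : ℕ} {φ : LForm} (t : LTm) :
      LIDer (subst x t φ :: Γ) Δ → LIDer (.all x φ :: Γ) Δ
  | allR {Γ : List LForm} {x : ℕ} {φ : LForm} (w : ℕ) :
      FreshFor w Γ → w ∉ free (LForm.all x φ) →
      LIDer Γ (some (subst x (.var w) φ)) → LIDer Γ (some (.all x φ))
  | exL {Γ : List LForm} {Δ : Option LForm} {x : ℕ} {φ : LForm} (w : ℕ) :
      FreshFor w Γ → FreshForO w Δ → w ∉ free (LForm.ex x φ) →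
      LIDer (subst x (.var w) φ :: Γ) Δ → LIDer (.ex x φ :: Γ) Δ
  | exR {Γ : List LForm} {x : ℕ} {φ : LForm} (t : LTm) :
      LIDer Γ (some (subst x t φ)) → LIDer Γ (some (.ex x φ))
  | weakL {Γ : List LForm} {Δ : Option LForm} (φ : LForm) :
      LIDer Γ Δ → LIDer (φ :: Γ) Δ
  | weakR {Γ : List LForm} (φ : LForm) : LIDer Γ none → LIDer Γ (some φ)
  | struct {Γ Γ' : List LForm} {Δ : Option LForm} :
      (∀ φ : LForm, φ ∈ Γ ↔ φ ∈ Γ') → LIDer Γ Δ → LIDer Γ' Δ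
  | cut {Γ Γ' : List LForm} {Δ : Option LForm} {φ : LForm} :
      LIDer Γ (some φ) → LIDer (φ :: Γ') Δ → LIDer (Γ ++ Γ') Δ

/-- Iterated universal closure: `closen n φ = ∀x₀ ⋯ ∀x_{n-1} φ`. -/
def closen : ℕ → LForm → LForm
  | 0, φ => φ
  | n + 1, φ => closen n (.all n φ)

/-- χ is the universal closure of the conditional c. -/
def IsClosureOf (χ : LForm) (c : LForm × LForm) : Prop :=
  ∃ n : ℕ, free (LForm.imp c.1 c.2) ⊆ {k | k < n} ∧ χ = closen n (.imp c.1 c.2)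

/-- A_τ(φ): the I(L_{∞ω}) sentence φ is assertible from the positivistic
theory τ: there are a set A of axioms of τ and a set E of true Σ(L_{∞ω})
sentences such that ⋀Ā, ⋀E ⊢ φ is derivable in LI_{∞ω}, where Ā is the set
of universal closures of the conditionals in A. -/
def Assertible (τ : Set (LForm × LForm)) (φ : LForm) : Prop :=
  ∃ (IA : ZFSet) (gA : ZFSet → LForm) (IE : ZFSet) (gE : ZFSet → LForm),
    (∀ a : ZFSet, a ∈ IA → ∃ c ∈ τ, IsClosureOf (gA a) c) ∧
    (∀ a : ZFSet, a ∈ IE → IsSigma (gE a) ∧ IsSentence (gE a) ∧ LTrue (gE a)) ∧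
    LIDer [.conj IA gA, .conj IE gE] (some φ)

end Infinitary

namespace Infinitary


/-! ### Auxiliary machinery -/

/-- Generalized weakening: enlarging the antecedent (as a set) preserves derivability. -/
lemma weak_many {Γ Γ' : List LForm} {Δ : Option LForm}
    (h : LIDer Γ Δ) (hsub : ∀ χ ∈ Γ, χ ∈ Γ') : LIDer Γ' Δ := by
  have hW : ∀ L : List LForm, LIDer (L ++ Γ) Δ := by
    intro L
    induction L with
    | nil => simpa using h
    | cons χ L ih => exact LIDer.weakL χ ih
  refine LIDer.struct (fun χ => ?_) (hW Γ')
  simp only [List.mem_append]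
  exact ⟨fun h1 => h1.elim id (hsub χ), Or.inl⟩

/-- χ' is a set-indexed conjunction extending the set-indexed conjunction χ,
with no new free variables. -/
def Rep (χ χ' : LForm) : Prop :=
  ∃ I f J g, χ = LForm.conj I f ∧ χ' = LForm.conj J g ∧
    (∀ a : ZFSet, a ∈ I → ∃ b : ZFSet, b ∈ J ∧ g b = f a) ∧ free χ' ⊆ free χ

def RepE (χ χ' : LForm) : Prop := χ' = χ ∨ Rep χ χ'

lemma RepE.refl (χ : LForm) : RepE χ χ := Or.inl rfl

lemma RepE.free_subset {χ χ' : LForm} (h : RepE χ χ') : free χ' ⊆ free χ := by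
  rcases h with rfl | ⟨I, f, J, g, _, _, _, hf⟩
  · exact subset_rfl
  · exact hf

lemma RepE.eq_of_ne_conj {χ χ' : LForm} (h : RepE χ χ')
    (hc : ∀ I f, χ ≠ LForm.conj I f) : χ' = χ := by
  rcases h with rfl | ⟨I, f, J, g, heq, _⟩
  · rfl
  · exact absurd heq (hc I f)

lemma forall₂_mem_right {R : LForm → LForm → Prop} :
    ∀ {l l' : List LForm}, List.Forall₂ R l l' → ∀ χ' ∈ l', ∃ χ ∈ l, R χ χ' := by
  intro l l' h
  induction h with
  | nil => intro χ' h'; exact absurd h' List.not_mem_nil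
  | cons hr _ ih =>
    intro χ' h'
    rcases List.mem_cons.1 h' with rfl | h'
    · exact ⟨_, List.mem_cons_self, hr⟩
    · obtain ⟨χ, hχ, hR⟩ := ih χ' h'
      exact ⟨χ, List.mem_cons_of_mem _ hχ, hR⟩

lemma forall₂_mem_left {R : LForm → LForm → Prop} :
    ∀ {l l' : List LForm}, List.Forall₂ R l l' → ∀ χ ∈ l, ∃ χ' ∈ l', R χ χ' := by
  intro l l' h
  induction h with
  | nil => intro χ h'; exact absurd h' List.not_mem_nil
  | cons hr _ ih =>
    intro χ h'
    rcases List.mem_cons.1 h' with rfl | h'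
    · exact ⟨_, List.mem_cons_self, hr⟩
    · obtain ⟨χ', hχ', hR⟩ := ih χ h'
      exact ⟨χ', List.mem_cons_of_mem _ hχ', hR⟩

lemma forall₂_append_split {R : LForm → LForm → Prop} :
    ∀ (l₁ l₂ : List LForm) {l' : List LForm}, List.Forall₂ R (l₁ ++ l₂) l' →
      ∃ l₁' l₂', l' = l₁' ++ l₂' ∧ List.Forall₂ R l₁ l₁' ∧ List.Forall₂ R l₂ l₂' := by
  intro l₁
  induction l₁ with
  | nil => intro l₂ l' h; exact ⟨[], l', rfl, List.Forall₂.nil, h⟩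
  | cons χ l₁ ih =>
    intro l₂ l' h
    cases h with
    | cons hr ht =>
      obtain ⟨l₁', l₂', rfl, h1, h2⟩ := ih l₂ ht
      exact ⟨_ :: l₁', l₂', rfl, List.Forall₂.cons hr h1, h2⟩

lemma forall₂_map {R : LForm → LForm → Prop} (f : LForm → LForm) :
    ∀ l : List LForm, (∀ χ ∈ l, R χ (f χ)) → List.Forall₂ R l (l.map f) := by
  intro l
  induction l with
  | nil => intro _; exact List.Forall₂.nil
  | cons χ l ih =>
    intro h
    exact List.Forall₂.cons (h χ (List.mem_cons_self))
      (ih fun χ' h' => h χ' (List.mem_cons_of_mem _ h'))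

lemma freshFor_of_forall₂ {w : ℕ} {Γ Γ' : List LForm}
    (h : List.Forall₂ RepE Γ Γ') (hw : FreshFor w Γ) : FreshFor w Γ' := by
  intro χ' hχ'
  obtain ⟨χ, hχ, hr⟩ := forall₂_mem_right h χ' hχ'
  exact fun hmem => hw χ hχ (hr.free_subset hmem)

/-- The key replacement lemma: replacing set-indexed conjunctions in the
antecedent by larger ones (with no new free variables) preserves derivability. -/
lemma replace_der : ∀ {Γ : List LForm} {Δ : Option LForm}, LIDer Γ Δ →
    ∀ Γ' : List LForm, List.Forall₂ RepE Γ Γ' → LIDer Γ' Δ := by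
  intro Γ Δ h
  induction h with
  | botL =>
    intro Γ' h'
    cases h' with
    | cons hr ht =>
      cases ht
      obtain rfl := hr.eq_of_ne_conj (fun I f h => LForm.noConfusion h)
      exact LIDer.botL
  | topR =>
    intro Γ' h'
    cases h'
    exact LIDer.topR
  | impL h1 h2 ih1 ih2 =>
    intro Γ'' h'
    cases h' with
    | cons hr ht =>
      obtain rfl := hr.eq_of_ne_conj (fun I f h => LForm.noConfusion h)
      obtain ⟨l₁', l₂', rfl, ha, hb⟩ := forall₂_append_split _ _ ht
      exact LIDer.impL (ih1 _ ha) (ih2 _ (List.Forall₂.cons (RepE.refl _) hb))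
  | impR h ih =>
    intro Γ' h'
    exact LIDer.impR (ih _ (List.Forall₂.cons (RepE.refl _) h'))
  | conjL a ha h ih =>
    intro Γ'' h'
    cases h' with
    | cons hr ht =>
      rcases hr with rfl | ⟨I₁, f₁, J, g, heq, rfl, helem, _⟩
      · exact LIDer.conjL a ha (ih _ (List.Forall₂.cons (RepE.refl _) ht))
      · injection heq with hI hf
        subst hI; subst hf
        obtain ⟨b, hb, hgb⟩ := helem a ha
        exact LIDer.conjL b hb (ih _ (List.Forall₂.cons (Or.inl hgb) ht))
  | conjR h ih =>
    intro Γ' h'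
    exact LIDer.conjR fun a ha => ih a ha _ h'
  | disjL h ih =>
    intro Γ'' h'
    cases h' with
    | cons hr ht =>
      obtain rfl := hr.eq_of_ne_conj (fun I f h => LForm.noConfusion h)
      exact LIDer.disjL fun a ha => ih a ha _ (List.Forall₂.cons (RepE.refl _) ht)
  | disjR a ha h ih =>
    intro Γ' h'
    exact LIDer.disjR a ha (ih _ h')
  | allL t h ih =>
    intro Γ'' h'
    cases h' with
    | cons hr ht =>
      obtain rfl := hr.eq_of_ne_conj (fun I f h => LForm.noConfusion h)
      exact LIDer.allL t (ih _ (List.Forall₂.cons (RepE.refl _) ht))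
  | allR w hfr hnf h ih =>
    intro Γ' h'
    exact LIDer.allR w (freshFor_of_forall₂ h' hfr) hnf (ih _ h')
  | exL w hfr hfo hnf h ih =>
    intro Γ'' h'
    cases h' with
    | cons hr ht =>
      obtain rfl := hr.eq_of_ne_conj (fun I f h => LForm.noConfusion h)
      exact LIDer.exL w (freshFor_of_forall₂ ht hfr) hfo hnf
        (ih _ (List.Forall₂.cons (RepE.refl _) ht))
  | exR t h ih =>
    intro Γ' h'
    exact LIDer.exR t (ih _ h')
  | weakL φ h ih =>
    intro Γ'' h'
    cases h' with
    | cons _ ht => exact LIDer.weakL _ (ih _ ht)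
  | weakR φ h ih =>
    intro Γ' h'
    exact LIDer.weakR φ (ih _ h')
  | struct hmem h ih =>
    intro Γ'' h'
    classical
    rename_i Γ₁ Γ₂ Δ'
    set F : LForm → LForm := fun χ =>
      if hex : ∃ χ' ∈ Γ'', RepE χ χ' then hex.choose else χ with hF
    have hFspec : ∀ χ ∈ Γ₁, RepE χ (F χ) ∧ F χ ∈ Γ'' := by
      intro χ hχ
      have hχ2 : χ ∈ Γ₂ := (hmem χ).1 hχ
      obtain ⟨χ', hχ', hr⟩ := forall₂_mem_left h' χ hχ2
      have hex : ∃ χ' ∈ Γ'', RepE χ χ' := ⟨χ', hχ', hr⟩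
      have : F χ = hex.choose := by rw [hF]; exact dif_pos hex
      rw [this]
      exact ⟨hex.choose_spec.2, hex.choose_spec.1⟩
    have h1 : List.Forall₂ RepE Γ₁ (Γ₁.map F) :=
      forall₂_map F Γ₁ fun χ hχ => (hFspec χ hχ).1
    refine weak_many (ih _ h1) ?_
    intro χ' hχ'
    obtain ⟨χ, hχ, rfl⟩ := List.mem_map.1 hχ'
    exact (hFspec χ hχ).2
  | cut h1 h2 ih1 ih2 =>
    intro Γ'' h'
    obtain ⟨l₁', l₂', rfl, ha, hb⟩ := forall₂_append_split _ _ h'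
    exact LIDer.cut (ih1 _ ha) (ih2 _ (List.Forall₂.cons (RepE.refl _) hb))

/-- Multi-cut: cut away a list of formulas each derivable from Γ. -/
lemma cut_list {Γ : List LForm} {Δ : Option LForm} :
    ∀ L : List LForm, (∀ φ ∈ L, LIDer Γ (some φ)) → LIDer (L ++ Γ) Δ → LIDer Γ Δ := by
  intro L
  induction L with
  | nil => intro _ h; simpa using h
  | cons φ L ih =>
    intro hL h
    have hcut : LIDer (Γ ++ (L ++ Γ)) Δ :=
      LIDer.cut (hL φ (List.mem_cons_self)) h
    have hred : LIDer (L ++ Γ) Δ := by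
      refine LIDer.struct (fun χ => ?_) hcut
      simp only [List.mem_append]
      tauto
    exact ih (fun φ' hφ' => hL φ' (List.mem_cons_of_mem _ hφ')) hred

/-! ### Tagged unions of set-indexed families -/

/-- An injective sequence of tags. -/
def tag : ℕ → ZFSet
  | 0 => ∅
  | n + 1 => {tag n}

lemma tag_inj : ∀ m n : ℕ, tag m = tag n → m = n := by
  intro m
  induction m with
  | zero =>
    intro n h
    cases n with
    | zero => rfl
    | succ k =>
      exfalso
      have hmem : tag k ∈ tag 0 := by
        rw [h]; exact ZFSet.mem_singleton.2 rfl
      exact ZFSet.notMem_empty _ hmem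
  | succ j ih =>
    intro n h
    cases n with
    | zero =>
      exfalso
      have hmem : tag j ∈ tag 0 := by
        rw [← h]; exact ZFSet.mem_singleton.2 rfl
      exact ZFSet.notMem_empty _ hmem
    | succ k =>
      have hmem : tag j ∈ tag (k + 1) := by
        rw [← h]; exact ZFSet.mem_singleton.2 rfl
      simp only [tag] at hmem
      exact congrArg Nat.succ (ih k (ZFSet.mem_singleton.1 hmem))

/-- Union of the first n members of a sequence of sets. -/
def unionUpTo (f : ℕ → ZFSet) : ℕ → ZFSet
  | 0 => ∅
  | n + 1 => unionUpTo f n ∪ f n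

lemma mem_unionUpTo (f : ℕ → ZFSet) :
    ∀ (n : ℕ) (x : ZFSet), x ∈ unionUpTo f n ↔ ∃ i, i < n ∧ x ∈ f i := by
  intro n
  induction n with
  | zero =>
    intro x
    simp only [unionUpTo]
    constructor
    · intro h; exact absurd h (ZFSet.notMem_empty x)
    · rintro ⟨i, hi, _⟩; exact absurd hi (Nat.not_lt_zero i)
  | succ k ih =>
    intro x
    simp only [unionUpTo, ZFSet.mem_union, ih]
    constructor
    · rintro (⟨i, hi, hx⟩ | hx)
      · exact ⟨i, Nat.lt_succ_of_lt hi, hx⟩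
      · exact ⟨k, Nat.lt_succ_self k, hx⟩
    · rintro ⟨i, hi, hx⟩
      rcases Nat.lt_succ_iff_lt_or_eq.1 hi with hi | rfl
      · exact Or.inl ⟨i, hi, hx⟩
      · exact Or.inr hx

/-- The tagged union of a finite family of sets. -/
def taggedUnion (I : ℕ → ZFSet) (n : ℕ) : ZFSet :=
  unionUpTo (fun i => (I i).prod {tag i}) n

lemma mem_taggedUnion {I : ℕ → ZFSet} {n : ℕ} {z : ZFSet} :
    z ∈ taggedUnion I n ↔ ∃ i, i < n ∧ ∃ a, a ∈ I i ∧ z = ZFSet.pair a (tag i) := by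
  rw [taggedUnion, mem_unionUpTo]
  constructor
  · rintro ⟨i, hi, hz⟩
    rw [ZFSet.mem_prod] at hz
    obtain ⟨a, ha, b, hb, rfl⟩ := hz
    exact ⟨i, hi, a, ha, by rw [ZFSet.mem_singleton.1 hb]⟩
  · rintro ⟨i, hi, a, ha, rfl⟩
    exact ⟨i, hi, ZFSet.mem_prod.2 ⟨a, ha, tag i, ZFSet.mem_singleton.2 rfl, rfl⟩⟩

open Classical in
/-- Decode a tagged element back to the formula of the corresponding family. -/
noncomputable def decode (g : ℕ → ZFSet → LForm) (z : ZFSet) : LForm :=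
  if h : ∃ p : ZFSet × ℕ, z = ZFSet.pair p.1 (tag p.2) then
    g h.choose.2 h.choose.1 else LForm.tru

lemma decode_pair (g : ℕ → ZFSet → LForm) (a : ZFSet) (i : ℕ) :
    decode g (ZFSet.pair a (tag i)) = g i a := by
  have hex : ∃ p : ZFSet × ℕ, ZFSet.pair a (tag i) = ZFSet.pair p.1 (tag p.2) :=
    ⟨(a, i), rfl⟩
  rw [decode, dif_pos hex]
  obtain ⟨h1, h2⟩ := ZFSet.pair_injective hex.choose_spec.symm
  rw [h1, tag_inj _ _ h2]

/-! ### Closures are sentences -/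

lemma free_closen_empty : ∀ (n : ℕ) (φ : LForm),
    free φ ⊆ {k | k < n} → free (closen n φ) = ∅ := by
  intro n
  induction n with
  | zero =>
    intro φ h
    refine Set.eq_empty_of_forall_notMem fun m hm => ?_
    exact Nat.not_lt_zero m (h hm)
  | succ k ih =>
    intro φ h
    refine ih (LForm.all k φ) ?_
    intro m hm
    have hm' : m ∈ free φ \ ({k} : Set ℕ) := hm
    have hlt : m < k + 1 := h hm'.1
    have hne : m ≠ k := hm'.2
    exact Nat.lt_of_le_of_ne (Nat.le_of_lt_succ hlt) hne

lemma IsClosureOf.free_empty {χ : LForm} {c : LForm × LForm}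
    (h : IsClosureOf χ c) : free χ = ∅ := by
  obtain ⟨n, hsub, rfl⟩ := h
  exact free_closen_empty n _ hsub


/-- Let τ be a positivistic theory (a collection of conditionals
between finitary Σ formulas).  If φ₁, …, φₙ are I(L_{∞ω}) sentences, each
assertible from τ, and the sequent φ₁, …, φₙ ⊢ ψ is derivable in LI_{∞ω} for
an I(L_{∞ω}) sentence ψ, then ψ is assertible from τ. -/
theorem assertibility_closed_under_intuitionistic_derivation
    (τ : Set (LForm × LForm))
    (hτ : ∀ c ∈ τ, IsSigma c.1 ∧ IsSigma c.2 ∧ IsFinitary c.1 ∧ IsFinitary c.2)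
    (φs : List LForm)
    (hφs : ∀ φ ∈ φs, IsI φ ∧ IsSentence φ ∧ Assertible τ φ)
    (ψ : LForm) (hψI : IsI ψ) (hψs : IsSentence ψ)
    (hder : LIDer φs (some ψ)) :
    Assertible τ ψ := by
  classical
  -- choose the assertibility witnesses for each φᵢ
  have hW : ∀ i : Fin φs.length,
      ∃ (IA : ZFSet) (gA : ZFSet → LForm) (IE : ZFSet) (gE : ZFSet → LForm),
        (∀ a : ZFSet, a ∈ IA → ∃ c ∈ τ, IsClosureOf (gA a) c) ∧
        (∀ a : ZFSet, a ∈ IE → IsSigma (gE a) ∧ IsSentence (gE a) ∧ LTrue (gE a)) ∧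
        LIDer [.conj IA gA, .conj IE gE] (some (φs.get i)) :=
    fun i => (hφs _ (φs.get_mem i)).2.2
  choose IA gA IE gE hA hE hD using hW
  -- extend the witness families to all of ℕ
  set IA' : ℕ → ZFSet := fun i => if h : i < φs.length then IA ⟨i, h⟩ else ∅ with hIA'
  set gA' : ℕ → ZFSet → LForm :=
    fun i => if h : i < φs.length then gA ⟨i, h⟩ else fun _ => LForm.tru with hgA'
  set IE' : ℕ → ZFSet := fun i => if h : i < φs.length then IE ⟨i, h⟩ else ∅ with hIE'
  set gE' : ℕ → ZFSet → LForm :=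
    fun i => if h : i < φs.length then gE ⟨i, h⟩ else fun _ => LForm.tru with hgE'
  -- the merged index sets and families
  set JA : ZFSet := taggedUnion IA' φs.length with hJA
  set JE : ZFSet := taggedUnion IE' φs.length with hJE
  set gJA : ZFSet → LForm := decode gA' with hgJA
  set gJE : ZFSet → LForm := decode gE' with hgJE
  -- A-side condition for the merged family
  have hmergedA : ∀ z : ZFSet, z ∈ JA → ∃ c ∈ τ, IsClosureOf (gJA z) c := by
    intro z hz
    rw [hJA, mem_taggedUnion] at hz
    obtain ⟨i, hi, a, ha, rfl⟩ := hz
    rw [hgJA, decode_pair]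
    simp only [hIA', dif_pos hi] at ha
    simp only [hgA', dif_pos hi]
    exact hA ⟨i, hi⟩ a ha
  -- E-side condition for the merged family
  have hmergedE : ∀ z : ZFSet, z ∈ JE →
      IsSigma (gJE z) ∧ IsSentence (gJE z) ∧ LTrue (gJE z) := by
    intro z hz
    rw [hJE, mem_taggedUnion] at hz
    obtain ⟨i, hi, a, ha, rfl⟩ := hz
    rw [hgJE, decode_pair]
    simp only [hIE', dif_pos hi] at ha
    simp only [hgE', dif_pos hi]
    exact hE ⟨i, hi⟩ a ha
  -- both merged conjunctions are sentences
  have hfreeA : free (LForm.conj JA gJA) = ∅ := by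
    refine Set.eq_empty_of_forall_notMem fun m hm => ?_
    obtain ⟨z, hz, hmz⟩ := hm
    obtain ⟨c, _, hc⟩ := hmergedA z hz
    rw [hc.free_empty] at hmz
    exact hmz
  have hfreeE : free (LForm.conj JE gJE) = ∅ := by
    refine Set.eq_empty_of_forall_notMem fun m hm => ?_
    obtain ⟨z, hz, hmz⟩ := hm
    have := (hmergedE z hz).2.1
    rw [IsSentence] at this
    rw [this] at hmz
    exact hmz
  -- the replacement relations
  have hRepA : ∀ i : Fin φs.length, Rep (.conj (IA i) (gA i)) (.conj JA gJA) := by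
    intro i
    refine ⟨IA i, gA i, JA, gJA, rfl, rfl, ?_, by rw [hfreeA]; exact Set.empty_subset _⟩
    intro a ha
    refine ⟨ZFSet.pair a (tag i.1), ?_, ?_⟩
    · rw [hJA, mem_taggedUnion]
      exact ⟨i.1, i.2, a, by simp only [hIA', dif_pos i.2]; simpa using ha, rfl⟩
    · rw [hgJA, decode_pair]
      simp only [hgA', dif_pos i.2]
  have hRepE : ∀ i : Fin φs.length, Rep (.conj (IE i) (gE i)) (.conj JE gJE) := by
    intro i
    refine ⟨IE i, gE i, JE, gJE, rfl, rfl, ?_, by rw [hfreeE]; exact Set.empty_subset _⟩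
    intro a ha
    refine ⟨ZFSet.pair a (tag i.1), ?_, ?_⟩
    · rw [hJE, mem_taggedUnion]
      exact ⟨i.1, i.2, a, by simp only [hIE', dif_pos i.2]; simpa using ha, rfl⟩
    · rw [hgJE, decode_pair]
      simp only [hgE', dif_pos i.2]
  -- transform each witness derivation to the common merged context
  have hDi : ∀ i : Fin φs.length, LIDer [.conj JA gJA, .conj JE gJE] (some (φs.get i)) := by
    intro i
    exact replace_der (hD i) _
      (List.Forall₂.cons (Or.inr (hRepA i))
        (List.Forall₂.cons (Or.inr (hRepE i)) List.Forall₂.nil))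
  have hall : ∀ φ ∈ φs, LIDer [.conj JA gJA, .conj JE gJE] (some φ) := by
    intro φ hφ
    obtain ⟨i, rfl⟩ := List.mem_iff_get.1 hφ
    exact hDi i
  have hstep : LIDer (φs ++ [.conj JA gJA, .conj JE gJE]) (some ψ) :=
    weak_many hder (by intro χ hχ; exact List.mem_append_left _ hχ)
  exact ⟨JA, gJA, JE, gJE, hmergedA, hmergedE, cut_list φs hall hstep⟩

end Infinitary
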